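/- Let (U_k)_{k ∈ ℕ} be a sequence of i.i.d. positive real random variables on a probability space with expectation operator E. Assume E[U₁] = 1 and E[|log U₁|] < ∞. Then lim_{m → ∞} E[log( m^{-1} Σ_{ℓ=1}^m U_ℓ )] = 0. -/

import Mathlib

open MeasureTheory ProbabilityTheory Filter

/-- Let `(U_k)` be i.i.d. positive real random variables with `E[U₁] = 1` and
`E[|log U₁|] < ∞`.  Then `lim_{m → ∞} E[log(m⁻¹ Σ_{ℓ=1}^m U_ℓ)] = 0`. -/
theorem tendsto_integral_log_avg_iid
    {Ω : Type*} [MeasurableSpace Ω] (P : Measure Ω) [IsProbabilityMeasure P]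
    (U : ℕ → Ω → ℝ) (hUmeas : ∀ k, Measurable (U k))
    (hindep : iIndepFun U P)
    (hident : ∀ k, P.map (U k) = P.map (U 0))
    (hUpos : ∀ k ω, 0 < U k ω)
    (hUint : Integrable (U 0) P) (hUmean : ∫ ω, U 0 ω ∂P = 1)
    (hlogint : Integrable (fun ω => |Real.log (U 0 ω)|) P) :
    Tendsto (fun m : ℕ =>
        ∫ ω, Real.log ((m : ℝ)⁻¹ * ∑ ℓ ∈ Finset.range m, U ℓ ω) ∂P)
      atTop (nhds 0) := by
  -- notation
  set f : ℕ → Ω → ℝ := fun m ω => Real.log ((m : ℝ)⁻¹ * ∑ ℓ ∈ Finset.range m, U ℓ ω) with hf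
  set g : ℕ → Ω → ℝ := fun m ω => (m : ℝ)⁻¹ * ∑ ℓ ∈ Finset.range m, Real.log (U ℓ ω) with hg
  set h : ℕ → Ω → ℝ := fun m ω => (m : ℝ)⁻¹ * (∑ ℓ ∈ Finset.range m, U ℓ ω) - 1 with hh
  set c : ℝ := ∫ ω, Real.log (U 0 ω) ∂P with hc
  -- identical distribution
  have hUid : ∀ k, IdentDistrib (U k) (U 0) P P := fun k =>
    ⟨(hUmeas k).aemeasurable, (hUmeas 0).aemeasurable, hident k⟩
  have hLmeas : ∀ k, Measurable fun ω => Real.log (U k ω) := fun k =>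
    Real.measurable_log.comp (hUmeas k)
  have hLid : ∀ k, IdentDistrib (fun ω => Real.log (U k ω)) (fun ω => Real.log (U 0 ω)) P P :=
    fun k => (hUid k).comp Real.measurable_log
  have hLint : Integrable (fun ω => Real.log (U 0 ω)) P := by
    refine (integrable_norm_iff (hLmeas 0).aestronglyMeasurable).mp ?_
    simpa [Real.norm_eq_abs] using hlogint
  have hLintk : ∀ k, Integrable (fun ω => Real.log (U k ω)) P := fun k =>
    (hLid k).integrable_iff.mpr hLint
  have hUintk : ∀ k, Integrable (U k) P := fun k => (hUid k).integrable_iff.mpr hUint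
  have hUmeank : ∀ k, ∫ ω, U k ω ∂P = 1 := fun k => (hUid k).integral_eq.trans hUmean
  have hLmeank : ∀ k, ∫ ω, Real.log (U k ω) ∂P = c := fun k => (hLid k).integral_eq
  -- measurability of the sums
  have hsummeas : ∀ m : ℕ, Measurable fun ω => ∑ ℓ ∈ Finset.range m, U ℓ ω := fun m =>
    Finset.measurable_sum _ fun ℓ _ => hUmeas ℓ
  have hfmeas : ∀ m, Measurable (f m) := fun m =>
    Real.measurable_log.comp ((hsummeas m).const_mul _)
  have hgmeas : ∀ m, Measurable (g m) := fun m =>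
    (Finset.measurable_sum _ fun ℓ _ => hLmeas ℓ).const_mul _
  -- positivity of the average
  have havgpos : ∀ m : ℕ, 1 ≤ m → ∀ ω, 0 < (m : ℝ)⁻¹ * ∑ ℓ ∈ Finset.range m, U ℓ ω := by
    intro m hm ω
    have hmpos : (0 : ℝ) < (m : ℝ) := by exact_mod_cast hm
    have : 0 < ∑ ℓ ∈ Finset.range m, U ℓ ω :=
      Finset.sum_pos (fun ℓ _ => hUpos ℓ ω) ⟨0, Finset.mem_range.mpr hm⟩
    positivity
  -- Jensen : g ≤ f
  have hgf : ∀ m : ℕ, 1 ≤ m → ∀ ω, g m ω ≤ f m ω := by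
    intro m hm ω
    have hmpos : (0 : ℝ) < (m : ℝ) := by exact_mod_cast hm
    have hsum1 : ∑ _ℓ ∈ Finset.range m, (m : ℝ)⁻¹ = 1 := by
      simp [Finset.sum_const, Finset.card_range]
      field_simp
    have := strictConcaveOn_log_Ioi.concaveOn.le_map_sum
      (t := Finset.range m) (w := fun _ => (m : ℝ)⁻¹) (p := fun ℓ => U ℓ ω)
      (fun i _ => by positivity) hsum1 (fun i _ => Set.mem_Ioi.mpr (hUpos i ω))
    simpa [hf, hg, smul_eq_mul, ← Finset.mul_sum] using this
  -- log x ≤ x - 1 : f ≤ h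
  have hfh : ∀ m : ℕ, 1 ≤ m → ∀ ω, f m ω ≤ h m ω := fun m hm ω =>
    Real.log_le_sub_one_of_pos (havgpos m hm ω)
  -- integrability
  have hgint : ∀ m : ℕ, Integrable (g m) P := fun m =>
    (integrable_finset_sum _ fun ℓ _ => hLintk ℓ).const_mul _
  have hhint : ∀ m : ℕ, Integrable (h m) P := fun m =>
    (((integrable_finset_sum _ fun ℓ _ => hUintk ℓ).const_mul _).sub (integrable_const 1))
  have hfint : ∀ m : ℕ, 1 ≤ m → Integrable (f m) P := by
    intro m hm
    refine ((hgint m).abs.add (hhint m).abs).mono' (hfmeas m).aestronglyMeasurable ?_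
    filter_upwards with ω
    rw [Real.norm_eq_abs, abs_le]
    constructor
    · calc -(|g m ω| + |h m ω|) ≤ -|g m ω| := by
            have := abs_nonneg (h m ω); linarith
        _ ≤ g m ω := neg_abs_le _
        _ ≤ f m ω := hgf m hm ω
    · calc f m ω ≤ h m ω := hfh m hm ω
        _ ≤ |h m ω| := le_abs_self _
        _ ≤ |g m ω| + |h m ω| := by have := abs_nonneg (g m ω); linarith
  -- integrals of g and h
  have hgintegral : ∀ m : ℕ, 1 ≤ m → ∫ ω, g m ω ∂P = c := by
    intro m hm
    have hmpos : (0 : ℝ) < (m : ℝ) := by exact_mod_cast hm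
    rw [hg]
    simp only [integral_const_mul]
    rw [integral_finset_sum _ fun ℓ _ => hLintk ℓ]
    simp only [hLmeank]
    rw [Finset.sum_const, Finset.card_range, nsmul_eq_mul]
    field_simp
  have hhintegral : ∀ m : ℕ, 1 ≤ m → ∫ ω, h m ω ∂P = 0 := by
    intro m hm
    have hmpos : (0 : ℝ) < (m : ℝ) := by exact_mod_cast hm
    rw [hh]
    rw [integral_sub (((integrable_finset_sum _ fun ℓ _ => hUintk ℓ).const_mul _))
      (integrable_const 1)]
    simp only [integral_const_mul, integral_const, probReal_univ, ENNReal.toReal_one, smul_eq_mul,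
      one_mul]
    rw [integral_finset_sum _ fun ℓ _ => hUintk ℓ]
    simp only [hUmeank]
    rw [Finset.sum_const, Finset.card_range, nsmul_eq_mul, mul_one]
    field_simp
    norm_num
  -- a.e. limits from the strong law of large numbers
  have hpairU : Pairwise (Function.onFun (IndepFun · · P) U) := fun i j hij => hindep.indepFun hij
  have hSLLN_U : ∀ᵐ ω ∂P,
      Tendsto (fun m : ℕ => (m : ℝ)⁻¹ * ∑ ℓ ∈ Finset.range m, U ℓ ω) atTop (nhds 1) := by
    have := strong_law_ae_real U hUint hpairU hUid
    filter_upwards [this] with ω hω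
    rw [hUmean] at hω
    simpa [div_eq_inv_mul] using hω
  have hSLLN_L : ∀ᵐ ω ∂P, Tendsto (fun m : ℕ => g m ω) atTop (nhds c) := by
    have hpairL : Pairwise (Function.onFun (IndepFun · · P) fun k ω => Real.log (U k ω)) := fun i j hij =>
      (hindep.indepFun hij).comp Real.measurable_log Real.measurable_log
    have := strong_law_ae_real (fun k ω => Real.log (U k ω)) hLint hpairL hLid
    filter_upwards [this] with ω hω
    rw [hc]
    simpa [hg, div_eq_inv_mul] using hω
  have hf_tendsto : ∀ᵐ ω ∂P, Tendsto (fun m : ℕ => f m ω) atTop (nhds 0) := by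
    filter_upwards [hSLLN_U] with ω hω
    have hcont : ContinuousAt Real.log 1 := Real.continuousAt_log one_ne_zero
    have := hcont.tendsto.comp hω
    simpa [hf, Real.log_one, Function.comp_def] using this
  -- the nonnegative sequence ψ = f - g, with Fatou
  have hψ_tendsto : ∀ᵐ ω ∂P,
      Tendsto (fun m : ℕ => f m ω - g m ω) atTop (nhds (-c)) := by
    filter_upwards [hf_tendsto, hSLLN_L] with ω h1 h2
    simpa using h1.sub h2
  have hΨmeas : ∀ m : ℕ, Measurable fun ω => ENNReal.ofReal (f m ω - g m ω) := fun m =>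
    ENNReal.measurable_ofReal.comp ((hfmeas m).sub (hgmeas m))
  have hfatou : ENNReal.ofReal (-c) ≤
      liminf (fun m : ℕ => ∫⁻ ω, ENNReal.ofReal (f m ω - g m ω) ∂P) atTop := by
    have h1 : ∫⁻ ω, liminf (fun m : ℕ => ENNReal.ofReal (f m ω - g m ω)) atTop ∂P
        ≤ liminf (fun m : ℕ => ∫⁻ ω, ENNReal.ofReal (f m ω - g m ω) ∂P) atTop :=
      lintegral_liminf_le hΨmeas
    refine le_trans (le_of_eq ?_) h1
    have h2 : ∀ᵐ ω ∂P,
        liminf (fun m : ℕ => ENNReal.ofReal (f m ω - g m ω)) atTop = ENNReal.ofReal (-c) := by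
      filter_upwards [hψ_tendsto] with ω hω
      exact ((ENNReal.continuous_ofReal.tendsto _).comp hω).liminf_eq
    rw [lintegral_congr_ae h2, lintegral_const, measure_univ, mul_one]
  -- identification of the lintegrals for m ≥ 1
  have hΨint : ∀ᶠ m : ℕ in atTop,
      ∫⁻ ω, ENNReal.ofReal (f m ω - g m ω) ∂P
        = ENNReal.ofReal ((∫ ω, f m ω ∂P) - c) := by
    filter_upwards [eventually_ge_atTop 1] with m hm
    have hψint : Integrable (fun ω => f m ω - g m ω) P := (hfint m hm).sub (hgint m)
    have hψnn : 0 ≤ᵐ[P] fun ω => f m ω - g m ω := by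
      filter_upwards with ω
      exact sub_nonneg.mpr (hgf m hm ω)
    rw [← ofReal_integral_eq_lintegral_ofReal hψint hψnn,
      integral_sub (hfint m hm) (hgint m), hgintegral m hm]
  -- upper bound : ∫ f ≤ 0
  have hupper : ∀ᶠ m : ℕ in atTop, ∫ ω, f m ω ∂P ≤ 0 := by
    filter_upwards [eventually_ge_atTop 1] with m hm
    calc ∫ ω, f m ω ∂P ≤ ∫ ω, h m ω ∂P :=
          integral_mono (hfint m hm) (hhint m) (hfh m hm)
      _ = 0 := hhintegral m hm
  -- lower bound : ∫ f ≥ c (trivially) and eventual lower bounds via Fatou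
  have hlowc : ∀ᶠ m : ℕ in atTop, c ≤ ∫ ω, f m ω ∂P := by
    filter_upwards [eventually_ge_atTop 1] with m hm
    have : 0 ≤ ∫ ω, (f m ω - g m ω) ∂P := by
      refine integral_nonneg fun ω => sub_nonneg.mpr (hgf m hm ω)
    rw [integral_sub (hfint m hm) (hgint m), hgintegral m hm] at this
    linarith
  -- conclude
  rw [show (fun m : ℕ => ∫ ω, Real.log ((m : ℝ)⁻¹ * ∑ ℓ ∈ Finset.range m, U ℓ ω) ∂P)
      = fun m : ℕ => ∫ ω, f m ω ∂P from rfl]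
  refine tendsto_order.2 ⟨fun b hb => ?_, fun b hb => ?_⟩
  · -- b < 0 : show eventually b < ∫ f m
    by_cases hbc : b < c
    · filter_upwards [hlowc] with m hm
      exact lt_of_lt_of_le hbc hm
    · push_neg at hbc  -- c ≤ b < 0
      have hcneg : 0 < -c := by linarith
      have hlt : ENNReal.ofReal (b - c) < ENNReal.ofReal (-c) :=
        (ENNReal.ofReal_lt_ofReal_iff hcneg).mpr (by linarith)
      have hev := eventually_lt_of_lt_liminf (lt_of_lt_of_le hlt hfatou)
      filter_upwards [hev, hΨint] with m h1 h2
      rw [h2] at h1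
      have hbc' : 0 ≤ b - c := by linarith
      have := (ENNReal.ofReal_lt_ofReal_iff_of_nonneg hbc').mp h1
      linarith
  · -- 0 < b : eventually ∫ f m < b
    filter_upwards [hupper] with m hm
    exact lt_of_le_of_lt hm hb
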